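/- Let α ≥ 1 be a natural number, let x_i ∈ ℝ, and let f : ℝ → ℝ be a function of class C^(α+1) such that the iterated derivatives of f of all orders j with 0 ≤ j ≤ α − 1 vanish at x_i. Define g(x) = (x − x_i)·f'(x) − α·f(x). Then the iterated derivatives of g of all orders j with 0 ≤ j ≤ α vanish at x_i, and g^(α+1)(x_i) = f^(α+1)(x_i). -/

import Mathlib

/-- The key Leibniz computation behind claims (7) and (8) of the paper: the bracket
`g(x) = (x − x_i)·f'(x) − α·f(x)` vanishes to order `α + 1` at `x_i`, with leading
value `f^(α+1)(x_i)`. -/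
theorem obreshkoff_ehrlich_bracket_vanishing
    (α : ℕ) (hα : 1 ≤ α) (xi : ℝ) (f : ℝ → ℝ)
    (hf : ContDiff ℝ (α + 1) f)
    (hzero : ∀ j, j ≤ α - 1 → iteratedDeriv j f xi = 0)
    (g : ℝ → ℝ)
    (hg : g = fun x => (x - xi) * deriv f x - (α : ℝ) * f x) :
    (∀ j, j ≤ α → iteratedDeriv j g xi = 0) ∧
      iteratedDeriv (α + 1) g xi = iteratedDeriv (α + 1) f xi := by
  have key : ∀ k, k ≤ α → iteratedDeriv k g =
      fun x => (x - xi) * iteratedDeriv (k + 1) f x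
        + ((k : ℝ) - α) * iteratedDeriv k f x := by
    intro k hk
    induction k with
    | zero =>
      funext x
      simp [hg, iteratedDeriv_one]
      ring
    | succ k ih =>
      have hk' : k ≤ α := Nat.le_of_succ_le hk
      have hlt1 : ((k + 1 : ℕ) : WithTop ℕ∞) < (α : WithTop ℕ∞) + 1 := by
        exact_mod_cast Nat.succ_lt_succ (Nat.lt_of_succ_le hk)
      have hlt0 : ((k : ℕ) : WithTop ℕ∞) < (α : WithTop ℕ∞) + 1 := by
        exact_mod_cast Nat.lt_succ_of_le hk'
      have hF : Differentiable ℝ (iteratedDeriv (k + 1) f) :=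
        hf.differentiable_iteratedDeriv _ hlt1
      have hG : Differentiable ℝ (iteratedDeriv k f) :=
        hf.differentiable_iteratedDeriv _ hlt0
      rw [iteratedDeriv_succ, ih hk']
      funext x
      have hA : HasDerivAt (fun x : ℝ => x - xi) 1 x := (hasDerivAt_id x).sub_const xi
      have hB : HasDerivAt (iteratedDeriv (k + 1) f) (iteratedDeriv (k + 2) f x) x := by
        have := (hF x).hasDerivAt
        rwa [show iteratedDeriv (k + 2) f = deriv (iteratedDeriv (k + 1) f) from
          iteratedDeriv_succ]
      have hC : HasDerivAt (iteratedDeriv k f) (iteratedDeriv (k + 1) f x) x := by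
        have := (hG x).hasDerivAt
        rwa [show iteratedDeriv (k + 1) f = deriv (iteratedDeriv k f) from
          iteratedDeriv_succ]
      have hD := (hA.mul hB).add (hC.const_mul ((k : ℝ) - α))
      have := hD.deriv
      rw [show (fun x => (x - xi) * iteratedDeriv (k + 1) f x
          + ((k : ℝ) - α) * iteratedDeriv k f x) = ((fun x => x - xi) * iteratedDeriv (k + 1) f
          + fun y => ((k : ℝ) - α) * iteratedDeriv k f y) from rfl, this]
      push_cast
      ring
  constructor
  · intro j hj
    rw [key j hj]
    rcases eq_or_lt_of_le hj with h | h
    · subst h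
      simp
    · have hj' : j ≤ α - 1 := Nat.le_sub_one_of_lt h
      simp [hzero j hj']
  · rw [iteratedDeriv_succ, key α le_rfl]
    have hcont : Continuous (iteratedDeriv (α + 1) f) :=
      hf.continuous_iteratedDeriv _ le_rfl
    have hsimp : (fun x => (x - xi) * iteratedDeriv (α + 1) f x
        + ((α : ℝ) - α) * iteratedDeriv α f x)
        = fun x => (x - xi) * iteratedDeriv (α + 1) f x := by
      funext x; simp
    rw [hsimp]
    have hd : HasDerivAt (fun x => (x - xi) * iteratedDeriv (α + 1) f x)
        (iteratedDeriv (α + 1) f xi) xi := by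
      rw [hasDerivAt_iff_tendsto_slope]
      have hcongr : ∀ᶠ y in nhdsWithin xi {xi}ᶜ,
          slope (fun x => (x - xi) * iteratedDeriv (α + 1) f x) xi y
            = iteratedDeriv (α + 1) f y := by
        filter_upwards [self_mem_nhdsWithin] with y hy
        have hy' : y - xi ≠ 0 := sub_ne_zero.mpr hy
        rw [slope_def_field]
        field_simp
        ring
      rw [Filter.tendsto_congr' hcongr]
      exact (hcont.tendsto xi).mono_left nhdsWithin_le_nhds
    exact hd.deriv
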